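/- Let m ≥ 2 be an integer and c any real constant. Define A(s) = (∫₀^s (sinh t)^(m-1) dt)/(sinh s)^(m-1) for s > 0, and F(r) = ∫₀^r c·A(s)/√(1 + c²·A(s)²) ds for r ≥ 0. Then F(r) − (c/m)·(r²/2) = O(r⁴) as r → 0⁺. -/

import Mathlib

open intervalIntegral in

lemma sinh_le_aux {t : ℝ} (h0 : 0 ≤ t) (h1 : t ≤ 1) : Real.sinh t ≤ t + t ^ 3 := by
  have habs : |t| ≤ 1 := by rwa [abs_of_nonneg h0]
  have habs' : |(-t)| ≤ 1 := by rwa [abs_neg]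
  have hb1 := Real.exp_bound habs (by norm_num : (0:ℕ) < 3)
  have hb2 := Real.exp_bound habs' (by norm_num : (0:ℕ) < 3)
  rw [abs_of_nonneg h0] at hb1
  rw [abs_neg, abs_of_nonneg h0] at hb2
  simp only [Finset.sum_range_succ, Finset.sum_range_zero, Nat.factorial] at hb1 hb2
  rw [Real.sinh_eq]
  have h3 : t ^ 3 ≤ t := by
    calc t ^ 3 = t * t * t := by ring
    _ ≤ 1 * 1 * t := by
      apply mul_le_mul_of_nonneg_right _ h0
      nlinarith
    _ = t := by ring
  have e1 : Real.exp t ≤ 1 + t + t^2/2 + t^3 * (4/18) := by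
    have := abs_le.1 hb1
    push_cast at this ⊢
    nlinarith [this.2]
  have e2 : 1 - t + t^2/2 - t^3 * (4/18) ≤ Real.exp (-t) := by
    have := abs_le.1 hb2
    push_cast at this ⊢
    nlinarith [this.1]
  nlinarith


lemma pow_one_add_le (n : ℕ) {x : ℝ} (h0 : 0 ≤ x) (h1 : x ≤ 1) :
    (1 + x) ^ n ≤ 1 + (2 ^ n - 1) * x := by
  induction n with
  | zero => simp
  | succ k ih =>
    have h2 : (1:ℝ) ≤ 2 ^ k := one_le_pow₀ (by norm_num)
    have hp : (2:ℝ) ^ (k+1) = 2 * 2 ^ k := by ring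
    calc (1 + x) ^ (k+1) = (1 + x) ^ k * (1 + x) := by ring
    _ ≤ (1 + (2 ^ k - 1) * x) * (1 + x) := by
        apply mul_le_mul_of_nonneg_right ih (by linarith)
    _ = 1 + 2 ^ k * x + (2 ^ k - 1) * (x * x) := by ring
    _ ≤ 1 + (2 ^ (k+1) - 1) * x := by
        rw [hp]
        nlinarith [mul_le_of_le_one_right h0 h1]

open intervalIntegral in
lemma A_bound (n : ℕ) {s : ℝ} (h0 : 0 < s) (h1 : s ≤ 1) :
    |(∫ t in (0:ℝ)..s, Real.sinh t ^ n) / Real.sinh s ^ n - s / (n + 1)| ≤ 2 ^ n * s ^ 3 := by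
  set K : ℝ := 2 ^ n - 1 with hK
  have hK0 : 0 ≤ K := by
    have : (1:ℝ) ≤ 2 ^ n := one_le_pow₀ (by norm_num)
    simp only [hK]; linarith
  have hn1 : (0:ℝ) < n + 1 := by positivity
  have hlow : ∀ t ∈ Set.Icc (0:ℝ) s, t ^ n ≤ Real.sinh t ^ n := by
    intro t ht
    exact pow_le_pow_left₀ ht.1 (Real.self_le_sinh_iff.2 ht.1) n
  have hup : ∀ t ∈ Set.Icc (0:ℝ) s, Real.sinh t ^ n ≤ t ^ n + K * t ^ (n + 2) := by
    intro t ht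
    have ht0 := ht.1
    have ht1 : t ≤ 1 := ht.2.trans h1
    have h2 : Real.sinh t ≤ t * (1 + t ^ 2) := by
      have := sinh_le_aux ht0 ht1
      nlinarith
    have h3 : Real.sinh t ^ n ≤ (t * (1 + t ^ 2)) ^ n :=
      pow_le_pow_left₀ (Real.sinh_nonneg_iff.2 ht0) h2 n
    have h5 : (1 + t ^ 2) ^ n ≤ 1 + K * t ^ 2 :=
      pow_one_add_le n (by positivity) (by nlinarith)
    have h6 : t ^ n * (1 + t ^ 2) ^ n ≤ t ^ n * (1 + K * t ^ 2) :=
      mul_le_mul_of_nonneg_left h5 (by positivity)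
    rw [mul_pow] at h3
    calc Real.sinh t ^ n ≤ t ^ n * (1 + K * t ^ 2) := h3.trans h6
    _ = t ^ n + K * t ^ (n + 2) := by ring
  have hi1 : IntervalIntegrable (fun t => t ^ n) MeasureTheory.volume 0 s :=
    (continuous_pow n).intervalIntegrable 0 s
  have hi2 : IntervalIntegrable (fun t => Real.sinh t ^ n) MeasureTheory.volume 0 s :=
    (Real.continuous_sinh.pow n).intervalIntegrable 0 s
  have hi4 : IntervalIntegrable (fun t : ℝ => K * t ^ (n + 2)) MeasureTheory.volume 0 s :=
    (continuous_const.mul (continuous_pow (n + 2))).intervalIntegrable 0 s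
  have hi3 : IntervalIntegrable (fun t => t ^ n + K * t ^ (n + 2)) MeasureTheory.volume 0 s :=
    hi1.add hi4
  set N : ℝ := ∫ t in (0:ℝ)..s, Real.sinh t ^ n with hNdef
  set L : ℝ := s ^ (n + 1) / (n + 1) with hL
  have hL0 : 0 < L := by positivity
  have hNlow : L ≤ N := by
    have h9 := integral_mono_on h0.le hi1 hi2 hlow
    rwa [integral_pow, zero_pow (by omega), sub_zero] at h9
  have hNup : N ≤ L * (1 + (K + 1) * s ^ 2) := by
    have h7 := integral_mono_on h0.le hi2 hi3 hup
    have h8 : (∫ t in (0:ℝ)..s, (t ^ n + K * t ^ (n + 2)))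
        = s ^ (n + 1) / (n + 1) + K * (s ^ (n + 3) / (n + 3)) := by
      rw [integral_add hi1 hi4, integral_pow, integral_const_mul, integral_pow,
        zero_pow (by omega), zero_pow (by omega), sub_zero, sub_zero]
      rw [show n + 2 + 1 = n + 3 from rfl]
      push_cast
      ring
    rw [h8] at h7
    have hs3 : s ^ (n + 3) = s ^ (n + 1) * s ^ 2 := by ring
    have h10 : K * (s ^ (n + 3) / (n + 3)) ≤ L * ((K + 1) * s ^ 2) := by
      have e : L * ((K + 1) * s ^ 2) = (K + 1) * (s ^ (n + 1) * s ^ 2 / (n + 1)) := by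
        rw [hL]; ring
      rw [hs3, e]
      have h11 : s ^ (n+1) * s ^ 2 / (n+3) ≤ s ^ (n+1) * s ^ 2 / (n+1) := by
        gcongr
        all_goals first | positivity | linarith
      calc K * (s ^ (n+1) * s ^ 2 / (n + 3)) ≤ K * (s ^ (n+1) * s ^ 2 / (n+1)) :=
            mul_le_mul_of_nonneg_left h11 hK0
      _ ≤ (K + 1) * (s ^ (n + 1) * s ^ 2 / (n+1)) := by
            apply mul_le_mul_of_nonneg_right (by linarith) (by positivity)
    calc N ≤ s ^ (n+1)/(n+1) + K * (s ^ (n + 3) / (n + 3)) := h7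
    _ ≤ L + L * ((K+1) * s^2) := by rw [hL]; linarith
    _ = L * (1 + (K+1) * s ^ 2) := by ring
  -- denominator bounds
  set D : ℝ := Real.sinh s ^ n with hD
  have hDlow : s ^ n ≤ D := hlow s ⟨h0.le, le_refl s⟩
  have hDup : D ≤ s ^ n * (1 + (K+1) * s ^ 2) := by
    have h12 := hup s ⟨h0.le, le_refl s⟩
    have h11 : K * s ^ (n+2) ≤ (K+1) * s ^ (n+2) := by
      apply mul_le_mul_of_nonneg_right (by linarith) (by positivity)
    calc D ≤ s ^ n + K * s ^ (n+2) := h12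
    _ ≤ s ^ n + (K+1) * s ^ (n+2) := by linarith
    _ = s ^ n * (1 + (K+1) * s ^ 2) := by ring
  have hDpos : 0 < D := lt_of_lt_of_le (by positivity) hDlow
  have hspow : (0:ℝ) < s ^ n := by positivity
  set u : ℝ := (K + 1) * s ^ 2 with hu
  have hu0 : 0 ≤ u := by positivity
  set a : ℝ := s / (n + 1) with ha
  have ha0 : 0 < a := by positivity
  have hLa : L = a * s ^ n := by
    rw [hL, ha, pow_succ]; field_simp
  -- upper bound
  have hAup : N / D ≤ a + a * u := by
    calc N / D ≤ L * (1 + u) / s ^ n := by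
          gcongr
          all_goals first | exact hNup | exact hDlow
    _ = a + a * u := by rw [hLa]; field_simp
  -- lower bound
  have hAlow : a - a * u ≤ N / D := by
    have h13 : a * (1 - u) ≤ L / (s ^ n * (1 + u)) := by
      rw [le_div_iff₀ (by positivity), hLa]
      nlinarith [sq_nonneg u, mul_nonneg (mul_nonneg ha0.le hu0) hu0]
    calc a - a * u = a * (1 - u) := by ring
    _ ≤ L / (s ^ n * (1 + u)) := h13
    _ ≤ N / D := by
        gcongr
        all_goals first | exact hNlow | exact hDup | exact hL0.le.trans hNlow | positivity
  -- conclude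
  have hau : a * u ≤ 2 ^ n * s ^ 3 := by
    have h14 : a ≤ s := by
      rw [ha]
      calc s / (↑n + 1) ≤ s / 1 := by gcongr; linarith
      _ = s := div_one s
    have h15 : K + 1 = 2 ^ n := by rw [hK]; ring
    calc a * u ≤ s * u := mul_le_mul_of_nonneg_right h14 hu0
    _ = (K + 1) * s ^ 3 := by rw [hu]; ring
    _ = 2 ^ n * s ^ 3 := by rw [h15]
  rw [abs_le]
  constructor <;> [linarith; linarith]


lemma sqrt_term (w : ℝ) : |w / Real.sqrt (1 + w ^ 2) - w| ≤ |w| ^ 3 / 2 := by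
  have h1 : (1:ℝ) ≤ Real.sqrt (1 + w ^ 2) := Real.one_le_sqrt.2 (by nlinarith)
  have hpos : 0 < Real.sqrt (1 + w ^ 2) := lt_of_lt_of_le one_pos h1
  have hup : Real.sqrt (1 + w ^ 2) ≤ 1 + w ^ 2 / 2 :=
    (Real.sqrt_le_left (by positivity)).2 (by nlinarith [sq_nonneg (w ^ 2)])
  have key : w / Real.sqrt (1 + w ^ 2) - w
      = w * ((1 - Real.sqrt (1 + w ^ 2)) / Real.sqrt (1 + w ^ 2)) := by
    field_simp
  rw [key, abs_mul]
  have h2 : |(1 - Real.sqrt (1 + w ^ 2)) / Real.sqrt (1 + w ^ 2)| ≤ w ^ 2 / 2 := by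
    rw [abs_div, abs_of_pos hpos, abs_of_nonpos (by linarith)]
    rw [div_le_iff₀ hpos]
    nlinarith
  calc |w| * |(1 - Real.sqrt (1 + w ^ 2)) / Real.sqrt (1 + w ^ 2)|
      ≤ |w| * (w ^ 2 / 2) := mul_le_mul_of_nonneg_left h2 (abs_nonneg w)
  _ = |w| ^ 3 / 2 := by rw [← sq_abs]; ring

lemma point_bound (n : ℕ) (c : ℝ) {s x : ℝ} (h0 : 0 < s) (h1 : s ≤ 1)
    (hx : |x - s / (n + 1)| ≤ 2 ^ n * s ^ 3) :
    |c * x / Real.sqrt (1 + c ^ 2 * x ^ 2) - c / (n + 1) * s| ≤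
      (|c| * 2 ^ n + |c| ^ 3 * (1 + 2 ^ n) ^ 3 / 2) * s ^ 3 := by
  have hw : 1 + c ^ 2 * x ^ 2 = 1 + (c * x) ^ 2 := by ring
  rw [hw]
  have hst := sqrt_term (c * x)
  have hn1 : (0:ℝ) < n + 1 := by positivity
  have hxb : |x| ≤ (1 + 2 ^ n) * s := by
    have h2 : |x| ≤ s / (n + 1) + 2 ^ n * s ^ 3 := by
      have := abs_sub_abs_le_abs_sub x (s / (n + 1))
      have h3 : |s / (n + 1)| = s / (n + 1) := abs_of_pos (by positivity)
      linarith [abs_le.1 hx |>.2, this]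
    have h4 : s / (n + 1) ≤ s := by
      calc s / (↑n + 1) ≤ s / 1 := by gcongr; linarith
      _ = s := div_one s
    have h5 : s ^ 3 ≤ s := by
      have hs2 : s ^ 2 ≤ 1 := by nlinarith
      nlinarith
    calc |x| ≤ s / (n + 1) + 2 ^ n * s ^ 3 := h2
    _ ≤ s + 2 ^ n * s := by
        have : (0:ℝ) < 2 ^ n := by positivity
        nlinarith
    _ = (1 + 2 ^ n) * s := by ring
  have hT : |c * x / Real.sqrt (1 + (c * x) ^ 2) - c / (n + 1) * s|
      ≤ |c * x / Real.sqrt (1 + (c * x) ^ 2) - c * x| + |c * x - c / (n + 1) * s| :=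
    abs_sub_le _ _ _
  have hB : |c * x - c / (n + 1) * s| ≤ |c| * (2 ^ n * s ^ 3) := by
    have h6 : c * x - c / (n + 1) * s = c * (x - s / (n + 1)) := by field_simp
    rw [h6, abs_mul]
    exact mul_le_mul_of_nonneg_left hx (abs_nonneg c)
  have hC : |c * x| ^ 3 ≤ |c| ^ 3 * ((1 + 2 ^ n) ^ 3 * s ^ 3) := by
    rw [abs_mul, mul_pow]
    have h7 : |x| ^ 3 ≤ ((1 + 2 ^ n) * s) ^ 3 := pow_le_pow_left₀ (abs_nonneg x) hxb 3
    rw [mul_pow] at h7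
    exact mul_le_mul_of_nonneg_left h7 (by positivity)
  calc |c * x / Real.sqrt (1 + (c * x) ^ 2) - c / (n + 1) * s|
      ≤ |c * x| ^ 3 / 2 + |c| * (2 ^ n * s ^ 3) := by linarith
  _ ≤ |c| ^ 3 * ((1 + 2 ^ n) ^ 3 * s ^ 3) / 2 + |c| * (2 ^ n * s ^ 3) := by linarith
  _ = (|c| * 2 ^ n + |c| ^ 3 * (1 + 2 ^ n) ^ 3 / 2) * s ^ 3 := by ring


lemma g_le_one (w : ℝ) : |w / Real.sqrt (1 + w ^ 2)| ≤ 1 := by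
  have h1 : (1:ℝ) ≤ Real.sqrt (1 + w ^ 2) := Real.one_le_sqrt.2 (by nlinarith)
  have hpos : 0 < Real.sqrt (1 + w ^ 2) := lt_of_lt_of_le one_pos h1
  rw [abs_div, abs_of_pos hpos, div_le_one hpos]
  have h2 : |w| = Real.sqrt (w ^ 2) := by rw [Real.sqrt_sq_eq_abs]
  rw [h2]
  exact Real.sqrt_le_sqrt (by linarith)

open Filter Topology Asymptotics intervalIntegral

theorem stmt_14 (m : ℕ) (hm : 2 ≤ m) (c : ℝ)
    (A : ℝ → ℝ)
    (hA : ∀ s : ℝ, 0 < s → A s =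
      (∫ t in (0:ℝ)..s, Real.sinh t ^ (m - 1)) / Real.sinh s ^ (m - 1))
    (F : ℝ → ℝ)
    (hF : ∀ r : ℝ, 0 ≤ r →
      F r = ∫ s in (0:ℝ)..r, c * A s / Real.sqrt (1 + c ^ 2 * A s ^ 2)) :
    (fun r : ℝ => F r - (c / (m : ℝ)) * (r ^ 2 / 2)) =O[𝓝[>] (0:ℝ)] fun r : ℝ => r ^ 4 := by
  set n := m - 1 with hn
  have hmn : n + 1 = m := by omega
  have hnR : ((n:ℝ) + 1) = (m:ℝ) := by
    rw [← hmn]; push_cast; ring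
  set C : ℝ := |c| * 2 ^ n + |c| ^ 3 * (1 + 2 ^ n) ^ 3 / 2 with hC
  have hC0 : 0 ≤ C := by positivity
  rw [Asymptotics.isBigO_iff]
  refine ⟨C, ?_⟩
  filter_upwards [Ioo_mem_nhdsGT_of_mem (show (0:ℝ) ∈ Set.Ico 0 1 by norm_num)] with r hr
  obtain ⟨hr0, hr1⟩ := hr
  set g : ℝ → ℝ := fun s => c * A s / Real.sqrt (1 + c ^ 2 * A s ^ 2) with hg
  set G : ℝ → ℝ := fun s => (∫ t in (0:ℝ)..s, Real.sinh t ^ n) / Real.sinh s ^ n with hG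
  -- continuity of the model function on Ioc 0 r
  have hcontG : ContinuousOn G (Set.Ioc (0:ℝ) r) := by
    apply ContinuousOn.div
    · exact (continuous_primitive
        (fun a b => (Real.continuous_sinh.pow n).intervalIntegrable a b) 0).continuousOn
    · exact (Real.continuous_sinh.pow n).continuousOn
    · intro s hs
      exact pow_ne_zero n (Real.sinh_pos_iff.2 hs.1).ne'
  have hcontg' : ContinuousOn (fun s => c * G s / Real.sqrt (1 + c ^ 2 * G s ^ 2))
      (Set.Ioc (0:ℝ) r) := by
    apply ContinuousOn.div
    · exact continuousOn_const.mul hcontG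
    · exact Real.continuous_sqrt.comp_continuousOn
        (continuousOn_const.add (continuousOn_const.mul (hcontG.pow 2)))
    · intro s hs
      have : (0:ℝ) < 1 + c ^ 2 * G s ^ 2 := by positivity
      exact (Real.sqrt_pos.2 this).ne'
  have hgeq : ∀ s ∈ Set.Ioc (0:ℝ) r, g s = c * G s / Real.sqrt (1 + c ^ 2 * G s ^ 2) := by
    intro s hs
    simp only [hg, hG]
    rw [hA s hs.1]
  have hmeas : MeasureTheory.AEStronglyMeasurable g
      (MeasureTheory.volume.restrict (Set.Ioc (0:ℝ) r)) := by
    refine (hcontg'.aestronglyMeasurable measurableSet_Ioc).congr ?_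
    refine (MeasureTheory.ae_restrict_iff' measurableSet_Ioc).2 (.of_forall fun s hs => ?_)
    exact (hgeq s hs).symm
  have hbound : ∀ s, ‖g s‖ ≤ 1 := by
    intro s
    have h2 : 1 + c ^ 2 * A s ^ 2 = 1 + (c * A s) ^ 2 := by ring
    rw [Real.norm_eq_abs, hg]
    simp only
    rw [h2]
    exact g_le_one (c * A s)
  have hint_g : IntervalIntegrable g MeasureTheory.volume 0 r := by
    rw [intervalIntegrable_iff_integrableOn_Ioc_of_le hr0.le]
    exact (MeasureTheory.integrable_const 1).mono' hmeas (.of_forall hbound)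
  have hint_lin : IntervalIntegrable (fun s : ℝ => c / (n + 1) * s) MeasureTheory.volume 0 r :=
    (continuous_const.mul continuous_id).intervalIntegrable 0 r
  have hFr : F r = ∫ s in (0:ℝ)..r, g s := hF r hr0.le
  have hlin : (∫ s in (0:ℝ)..r, c / (n + 1) * s) = c / (n + 1) * (r ^ 2 / 2) := by
    rw [integral_const_mul, integral_id]
    norm_num
  have hsplit : F r - c / (m:ℝ) * (r ^ 2 / 2)
      = ∫ s in (0:ℝ)..r, (g s - c / (n + 1) * s) := by
    rw [integral_sub hint_g hint_lin, hlin, hFr, hnR]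
  have hptwise : ∀ᵐ t ∂(MeasureTheory.volume.restrict (Set.uIoc 0 r)),
      ‖g t - c / (n + 1) * t‖ ≤ C * t ^ 3 := by
    rw [Set.uIoc_of_le hr0.le]
    refine (MeasureTheory.ae_restrict_iff' measurableSet_Ioc).2 (.of_forall fun s hs => ?_)
    have hs0 := hs.1
    have hs1 : s ≤ 1 := hs.2.trans hr1.le
    rw [Real.norm_eq_abs, hg]
    simp only
    rw [hA s hs0]
    rw [hC, mul_comm (|c| * 2 ^ n + |c| ^ 3 * (1 + 2 ^ n) ^ 3 / 2) (s ^ 3)]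
    rw [mul_comm (s ^ 3)]
    exact point_bound n c hs0 hs1 (A_bound n hs0 hs1)
  have hb2 : IntervalIntegrable (fun t : ℝ => C * t ^ 3) MeasureTheory.volume 0 r :=
    (continuous_const.mul (continuous_pow 3)).intervalIntegrable 0 r
  have hkey := (norm_integral_le_of_norm_le hr0.le (by rw [Set.uIoc_of_le hr0.le] at hptwise; exact (MeasureTheory.ae_restrict_iff' measurableSet_Ioc).1 hptwise) hb2).trans (le_abs_self _)
  rw [← hsplit] at hkey
  have hval : (∫ t in (0:ℝ)..r, C * t ^ 3) = C * (r ^ 4 / 4) := by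
    rw [integral_const_mul, integral_pow]
    norm_num
  rw [hval] at hkey
  have h4 : (0:ℝ) ≤ r ^ 4 := by positivity
  clear_value C
  calc ‖F r - c / (m:ℝ) * (r ^ 2 / 2)‖ ≤ |C * (r ^ 4 / 4)| := hkey
  _ = C * (r ^ 4 / 4) := abs_of_nonneg (by positivity)
  _ = C * r ^ 4 / 4 := by ring
  _ ≤ C * r ^ 4 := by
      have hCr : (0:ℝ) ≤ C * r ^ 4 := mul_nonneg hC0 h4
      linarith
  _ = C * ‖r ^ 4‖ := by rw [Real.norm_eq_abs, abs_of_nonneg h4]
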